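/- If (c₁,c₂,c₃) ≠ (0,0,0), then every tuple (c₁,…,c₆,f₁,…,f₄,t₁,t₂) ∈ ℤ¹² is ψ-equivalent to a tuple whose f₄-coordinate f₄′ satisfies 0 ≤ f₄′ < gcd(c₁,c₂,c₃). -/

import Mathlib

/-- A 12-tuple of integers, with coordinates written `(c₁,…,c₆,f₁,…,f₄,t₁,t₂)`. -/
structure Tuple : Type where
  c1 : ℤ
  c2 : ℤ
  c3 : ℤ
  c4 : ℤ
  c5 : ℤ
  c6 : ℤ
  f1 : ℤ
  f2 : ℤ
  f3 : ℤ
  f4 : ℤ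
  t1 : ℤ
  t2 : ℤ

/-- The move ψ₂₁ : f₃↦f₃+c₅, f₄↦f₄−c₁, t₁↦t₁+f₁. -/
def psi21 : Equiv.Perm Tuple where
  toFun x := { x with f3 := x.f3 + x.c5, f4 := x.f4 - x.c1, t1 := x.t1 + x.f1 }
  invFun x := { x with f3 := x.f3 - x.c5, f4 := x.f4 + x.c1, t1 := x.t1 - x.f1 }
  left_inv x := by cases x; simp
  right_inv x := by cases x; simp

/-- The move ψ₄₁ : f₂↦f₂+c₆, f₃↦f₃−c₅, t₂↦t₂−f₁. -/
def psi41 : Equiv.Perm Tuple where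
  toFun x := { x with f2 := x.f2 + x.c6, f3 := x.f3 - x.c5, t2 := x.t2 - x.f1 }
  invFun x := { x with f2 := x.f2 - x.c6, f3 := x.f3 + x.c5, t2 := x.t2 + x.f1 }
  left_inv x := by cases x; simp
  right_inv x := by cases x; simp

/-- The move ψ₁₂ : f₃↦f₃−c₄, f₄↦f₄+c₂, t₁↦t₁+f₂. -/
def psi12 : Equiv.Perm Tuple where
  toFun x := { x with f3 := x.f3 - x.c4, f4 := x.f4 + x.c2, t1 := x.t1 + x.f2 }
  invFun x := { x with f3 := x.f3 + x.c4, f4 := x.f4 - x.c2, t1 := x.t1 - x.f2 }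
  left_inv x := by cases x; simp
  right_inv x := by cases x; simp

/-- The move ψ₃₂ : f₁↦f₁+c₆, f₄↦f₄−c₂, t₂↦t₂−f₂. -/
def psi32 : Equiv.Perm Tuple where
  toFun x := { x with f1 := x.f1 + x.c6, f4 := x.f4 - x.c2, t2 := x.t2 - x.f2 }
  invFun x := { x with f1 := x.f1 - x.c6, f4 := x.f4 + x.c2, t2 := x.t2 + x.f2 }
  left_inv x := by cases x; simp
  right_inv x := by cases x; simp

/-- The move ψ₄₃ : f₁↦f₁+c₅, f₂↦f₂−c₄, t₁↦t₁+f₃. -/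
def psi43 : Equiv.Perm Tuple where
  toFun x := { x with f1 := x.f1 + x.c5, f2 := x.f2 - x.c4, t1 := x.t1 + x.f3 }
  invFun x := { x with f1 := x.f1 - x.c5, f2 := x.f2 + x.c4, t1 := x.t1 - x.f3 }
  left_inv x := by cases x; simp
  right_inv x := by cases x; simp

/-- The move ψ₂₃ : f₁↦f₁−c₅, f₄↦f₄+c₃, t₂↦t₂−f₃. -/
def psi23 : Equiv.Perm Tuple where
  toFun x := { x with f1 := x.f1 - x.c5, f4 := x.f4 + x.c3, t2 := x.t2 - x.f3 }
  invFun x := { x with f1 := x.f1 + x.c5, f4 := x.f4 - x.c3, t2 := x.t2 + x.f3 }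
  left_inv x := by cases x; simp
  right_inv x := by cases x; simp

/-- The move ψ₃₄ : f₁↦f₁−c₁, f₂↦f₂+c₂, t₁↦t₁+f₄. -/
def psi34 : Equiv.Perm Tuple where
  toFun x := { x with f1 := x.f1 - x.c1, f2 := x.f2 + x.c2, t1 := x.t1 + x.f4 }
  invFun x := { x with f1 := x.f1 + x.c1, f2 := x.f2 - x.c2, t1 := x.t1 - x.f4 }
  left_inv x := by cases x; simp
  right_inv x := by cases x; simp

/-- The move ψ₁₄ : f₂↦f₂−c₂, f₃↦f₃+c₃, t₂↦t₂−f₄. -/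
def psi14 : Equiv.Perm Tuple where
  toFun x := { x with f2 := x.f2 - x.c2, f3 := x.f3 + x.c3, t2 := x.t2 - x.f4 }
  invFun x := { x with f2 := x.f2 + x.c2, f3 := x.f3 - x.c3, t2 := x.t2 + x.f4 }
  left_inv x := by cases x; simp
  right_inv x := by cases x; simp

/-- The list of the eight ψ-moves. -/
def psiMoves : List (Equiv.Perm Tuple) :=
  [psi21, psi41, psi12, psi32, psi43, psi23, psi34, psi14]

/-- Two tuples are ψ-equivalent if one is obtained from the other by a finite
composition of the eight ψ-moves and their inverses, i.e. they are related by the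
equivalence relation generated by single applications of the moves. -/
def PsiEquiv : Tuple → Tuple → Prop :=
  Relation.EqvGen (fun x y => ∃ g ∈ psiMoves, g x = y)


lemma psi21_apply (x : Tuple) :
    psi21 x = { x with f3 := x.f3 + x.c5, f4 := x.f4 - x.c1, t1 := x.t1 + x.f1 } := rfl
lemma psi21_inv_apply (x : Tuple) :
    psi21⁻¹ x = { x with f3 := x.f3 - x.c5, f4 := x.f4 + x.c1, t1 := x.t1 - x.f1 } := rfl
lemma psi12_apply (x : Tuple) :
    psi12 x = { x with f3 := x.f3 - x.c4, f4 := x.f4 + x.c2, t1 := x.t1 + x.f2 } := rfl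
lemma psi12_inv_apply (x : Tuple) :
    psi12⁻¹ x = { x with f3 := x.f3 + x.c4, f4 := x.f4 - x.c2, t1 := x.t1 - x.f2 } := rfl
lemma psi23_apply (x : Tuple) :
    psi23 x = { x with f1 := x.f1 - x.c5, f4 := x.f4 + x.c3, t2 := x.t2 - x.f3 } := rfl
lemma psi23_inv_apply (x : Tuple) :
    psi23⁻¹ x = { x with f1 := x.f1 + x.c5, f4 := x.f4 - x.c3, t2 := x.t2 + x.f3 } := rfl

lemma psiEquiv_zpow (g : Equiv.Perm Tuple) (hg : g ∈ psiMoves) (n : ℤ) (T : Tuple) :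
    PsiEquiv T ((g ^ n) T) := by
  induction n using Int.induction_on with
  | zero => simpa [PsiEquiv] using Relation.EqvGen.refl T
  | succ n ih =>
      have hpow : g ^ ((n : ℤ) + 1) = g * g ^ (n : ℤ) := by group
      rw [hpow, Equiv.Perm.mul_apply]
      exact Relation.EqvGen.trans _ _ _ ih (Relation.EqvGen.rel _ _ ⟨g, hg, rfl⟩)
  | pred n ih =>
      have hpow : g ^ (-(n : ℤ) - 1) = g⁻¹ * g ^ (-(n : ℤ)) := by group
      rw [hpow, Equiv.Perm.mul_apply]
      refine Relation.EqvGen.trans _ _ _ ih (Relation.EqvGen.symm _ _ ?_)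
      exact Relation.EqvGen.rel _ _ ⟨g, hg, Equiv.apply_symm_apply g _⟩

lemma psi21_zpow_spec (n : ℤ) (T : Tuple) :
    ((psi21 ^ n) T).c1 = T.c1 ∧ ((psi21 ^ n) T).c2 = T.c2 ∧ ((psi21 ^ n) T).c3 = T.c3 ∧
      ((psi21 ^ n) T).f4 = T.f4 - n * T.c1 := by
  induction n using Int.induction_on with
  | zero => simp
  | succ n ih =>
      have hpow : psi21 ^ ((n : ℤ) + 1) = psi21 * psi21 ^ (n : ℤ) := by group
      obtain ⟨h1, h2, h3, h4⟩ := ih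
      rw [hpow, Equiv.Perm.mul_apply]
      simp only [psi21_apply]
      refine ⟨h1, h2, h3, ?_⟩
      simp only [h1, h4]; ring
  | pred n ih =>
      have hpow : psi21 ^ (-(n : ℤ) - 1) = psi21⁻¹ * psi21 ^ (-(n : ℤ)) := by group
      obtain ⟨h1, h2, h3, h4⟩ := ih
      rw [hpow, Equiv.Perm.mul_apply]
      simp only [psi21_inv_apply]
      refine ⟨h1, h2, h3, ?_⟩
      simp only [h1, h4]; ring

lemma psi12_zpow_spec (n : ℤ) (T : Tuple) :
    ((psi12 ^ n) T).c1 = T.c1 ∧ ((psi12 ^ n) T).c2 = T.c2 ∧ ((psi12 ^ n) T).c3 = T.c3 ∧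
      ((psi12 ^ n) T).f4 = T.f4 + n * T.c2 := by
  induction n using Int.induction_on with
  | zero => simp
  | succ n ih =>
      have hpow : psi12 ^ ((n : ℤ) + 1) = psi12 * psi12 ^ (n : ℤ) := by group
      obtain ⟨h1, h2, h3, h4⟩ := ih
      rw [hpow, Equiv.Perm.mul_apply]
      simp only [psi12_apply]
      refine ⟨h1, h2, h3, ?_⟩
      simp only [h2, h4]; ring
  | pred n ih =>
      have hpow : psi12 ^ (-(n : ℤ) - 1) = psi12⁻¹ * psi12 ^ (-(n : ℤ)) := by group
      obtain ⟨h1, h2, h3, h4⟩ := ih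
      rw [hpow, Equiv.Perm.mul_apply]
      simp only [psi12_inv_apply]
      refine ⟨h1, h2, h3, ?_⟩
      simp only [h2, h4]; ring

lemma psi23_zpow_spec (n : ℤ) (T : Tuple) :
    ((psi23 ^ n) T).c1 = T.c1 ∧ ((psi23 ^ n) T).c2 = T.c2 ∧ ((psi23 ^ n) T).c3 = T.c3 ∧
      ((psi23 ^ n) T).f4 = T.f4 + n * T.c3 := by
  induction n using Int.induction_on with
  | zero => simp
  | succ n ih =>
      have hpow : psi23 ^ ((n : ℤ) + 1) = psi23 * psi23 ^ (n : ℤ) := by group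
      obtain ⟨h1, h2, h3, h4⟩ := ih
      rw [hpow, Equiv.Perm.mul_apply]
      simp only [psi23_apply]
      refine ⟨h1, h2, h3, ?_⟩
      simp only [h3, h4]; ring
  | pred n ih =>
      have hpow : psi23 ^ (-(n : ℤ) - 1) = psi23⁻¹ * psi23 ^ (-(n : ℤ)) := by group
      obtain ⟨h1, h2, h3, h4⟩ := ih
      rw [hpow, Equiv.Perm.mul_apply]
      simp only [psi23_inv_apply]
      refine ⟨h1, h2, h3, ?_⟩
      simp only [h3, h4]; ring

lemma psi_reach (T : Tuple) (x y z : ℤ) :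
    ∃ T' : Tuple, PsiEquiv T T' ∧ T'.f4 = T.f4 + x * T.c1 + y * T.c2 + z * T.c3 := by
  obtain ⟨a1, a2, a3, a4⟩ := psi21_zpow_spec (-x) T
  obtain ⟨b1, b2, b3, b4⟩ := psi12_zpow_spec y ((psi21 ^ (-x)) T)
  obtain ⟨c1, c2, c3, c4⟩ := psi23_zpow_spec z ((psi12 ^ y) ((psi21 ^ (-x)) T))
  refine ⟨(psi23 ^ z) ((psi12 ^ y) ((psi21 ^ (-x)) T)), ?_, ?_⟩
  · have e1 := psiEquiv_zpow psi21 (by simp [psiMoves]) (-x) T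
    have e2 := psiEquiv_zpow psi12 (by simp [psiMoves]) y ((psi21 ^ (-x)) T)
    have e3 := psiEquiv_zpow psi23 (by simp [psiMoves]) z ((psi12 ^ y) ((psi21 ^ (-x)) T))
    exact Relation.EqvGen.trans _ _ _ (Relation.EqvGen.trans _ _ _ e1 e2) e3
  · rw [c4, b4, b3, a4, a3, a2]; ring

/-- If (c₁,c₂,c₃) ≠ (0,0,0), every tuple is ψ-equivalent to one whose f₄-coordinate
lies in [0, gcd(c₁,c₂,c₃)). -/
theorem f4_normalization (T : Tuple) (h : ¬(T.c1 = 0 ∧ T.c2 = 0 ∧ T.c3 = 0)) :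
    ∃ T' : Tuple, PsiEquiv T T' ∧ 0 ≤ T'.f4 ∧
      T'.f4 < (Int.gcd T.c1 (Int.gcd T.c2 T.c3) : ℤ) := by
  set g : ℤ := (Int.gcd T.c1 (Int.gcd T.c2 T.c3) : ℤ) with hg
  have hne : Int.gcd T.c1 (Int.gcd T.c2 T.c3) ≠ 0 := by
    intro h0
    rw [Int.gcd_eq_zero_iff] at h0
    obtain ⟨h1, h2⟩ := h0
    rw [Int.natCast_eq_zero, Int.gcd_eq_zero_iff] at h2
    exact h ⟨h1, h2.1, h2.2⟩
  have hgpos : 0 < g := by rw [hg]; exact_mod_cast Nat.pos_of_ne_zero hne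
  -- Bezout: g is a ℤ-combination of c1, c2, c3
  have hbez : ∃ u v w : ℤ, g = u * T.c1 + v * T.c2 + w * T.c3 := by
    have h1 : (Int.gcd T.c2 T.c3 : ℤ) = T.c2 * Int.gcdA T.c2 T.c3 + T.c3 * Int.gcdB T.c2 T.c3 :=
      Int.gcd_eq_gcd_ab T.c2 T.c3
    have h2 : g = T.c1 * Int.gcdA T.c1 (Int.gcd T.c2 T.c3)
        + (Int.gcd T.c2 T.c3 : ℤ) * Int.gcdB T.c1 (Int.gcd T.c2 T.c3) :=
      Int.gcd_eq_gcd_ab T.c1 (Int.gcd T.c2 T.c3)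
    exact ⟨Int.gcdA T.c1 (Int.gcd T.c2 T.c3),
      Int.gcdA T.c2 T.c3 * Int.gcdB T.c1 (Int.gcd T.c2 T.c3),
      Int.gcdB T.c2 T.c3 * Int.gcdB T.c1 (Int.gcd T.c2 T.c3), by rw [h2, h1]; ring⟩
  obtain ⟨u, v, w, huvw⟩ := hbez
  set r : ℤ := T.f4 % g with hr
  have hrg : r = T.f4 - g * (T.f4 / g) := by rw [hr, Int.emod_def]
  set m : ℤ := -(T.f4 / g) with hm
  have hrf : r = T.f4 + (m * u) * T.c1 + (m * v) * T.c2 + (m * w) * T.c3 := by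
    rw [hrg, hm]
    have : g * (T.f4 / g) = (T.f4 / g) * (u * T.c1 + v * T.c2 + w * T.c3) := by
      rw [← huvw]; ring
    rw [this]; ring
  obtain ⟨T', hequiv, hf4⟩ := psi_reach T (m * u) (m * v) (m * w)
  refine ⟨T', hequiv, ?_, ?_⟩
  · rw [hf4, ← hrf]; exact Int.emod_nonneg T.f4 (ne_of_gt hgpos)
  · rw [hf4, ← hrf]; exact Int.emod_lt_of_pos T.f4 hgpos
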